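/- Let Δ ⊆ ℝ^d be a reflexive polytope, let 1 ≤ k ≤ 4, and let v₁,…,v_k ∈ Δ ∩ ℤ^d be ℝ-linearly independent points satisfying Cone(v₁,…,v_k) ∩ Δ ∩ ℤ^d = {0, v₁, …, v_k}. Then there exists m ∈ ℤ^d with ⟨m, vᵢ⟩ = 1 for all i = 1,…,k. (This is the combinatorial content of the statement that the toric variety of the 4-skeleton of a Δ-maximal fan is Gorenstein.) -/

import Mathlib

open Pointwise

/-- The standard pairing `⟨m,n⟩ = ∑ i, mᵢ nᵢ` on `ℝ^d`. -/
def pairing {d : ℕ} (m n : Fin d → ℝ) : ℝ := ∑ i, m i * n i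

/-- A point of `ℝ^d` is a lattice point if all coordinates are integers. -/
def IsLatticePt {d : ℕ} (v : Fin d → ℝ) : Prop := ∀ i, ∃ n : ℤ, v i = (n : ℝ)

/-- The set of lattice points of `ℝ^d`. -/
def latticePts (d : ℕ) : Set (Fin d → ℝ) := {v | IsLatticePt v}

/-- A lattice polytope is the convex hull of finitely many lattice points. -/
def IsLatticePolytope {d : ℕ} (Δ : Set (Fin d → ℝ)) : Prop :=
  ∃ S : Finset (Fin d → ℝ), (S : Set (Fin d → ℝ)) ⊆ latticePts d ∧
    Δ = convexHull ℝ (S : Set (Fin d → ℝ))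

/-- The dual polytope `Δ* = {m : ⟨m,n⟩ ≥ -1 for all n ∈ Δ}`. -/
def dualPolytope {d : ℕ} (Δ : Set (Fin d → ℝ)) : Set (Fin d → ℝ) :=
  {m | ∀ n ∈ Δ, -1 ≤ pairing m n}

/-- A reflexive polytope: a lattice polytope with `0` in its interior
whose dual polytope is again a lattice polytope. -/
def IsReflexive {d : ℕ} (Δ : Set (Fin d → ℝ)) : Prop :=
  IsLatticePolytope Δ ∧ (0 : Fin d → ℝ) ∈ interior Δ ∧ IsLatticePolytope (dualPolytope Δ)

/-- `Cone(v₁,…,v_k) = {r₁v₁ + ⋯ + r_kv_k : rᵢ ≥ 0}`. -/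
def coneOf {d k : ℕ} (v : Fin k → (Fin d → ℝ)) : Set (Fin d → ℝ) :=
  {x | ∃ r : Fin k → ℝ, (∀ i, 0 ≤ r i) ∧ x = ∑ i, r i • v i}

/-- `r·∂Δ`, the frontier (topological boundary) of the dilate `rΔ`. -/
def bdry {d : ℕ} (r : ℝ) (Δ : Set (Fin d → ℝ)) : Set (Fin d → ℝ) := frontier (r • Δ)

/-- The points of `S` lie in a common proper face of `Δ`: there is `u` with
`⟨u,x⟩ ≤ 1` on `Δ` and `⟨u,v⟩ = 1` for all `v ∈ S`. -/
def InCommonFace {d : ℕ} (Δ : Set (Fin d → ℝ)) (S : Set (Fin d → ℝ)) : Prop :=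
  ∃ u : Fin d → ℝ, (∀ x ∈ Δ, pairing u x ≤ 1) ∧ ∀ v ∈ S, pairing u v = 1

/-- Coordinatewise cast of an integer vector to a real vector. -/
def toRealVec {d : ℕ} (n : Fin d → ℤ) : Fin d → ℝ := fun i => (n i : ℝ)

namespace GorAux

lemma isLatticePt_iff {d : ℕ} (x : Fin d → ℝ) :
    IsLatticePt x ↔ ∃ a : Fin d → ℤ, x = toRealVec a := by
  constructor
  · intro h
    exact ⟨fun i => (h i).choose, funext fun i => (h i).choose_spec⟩
  · rintro ⟨a, rfl⟩ i; exact ⟨a i, rfl⟩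

lemma pairing_int {d : ℕ} (a b : Fin d → ℤ) :
    pairing (toRealVec a) (toRealVec b) = ((∑ i, a i * b i : ℤ) : ℝ) := by
  unfold pairing toRealVec
  push_cast
  rfl

lemma pairing_sum_smul_right {d k : ℕ} (m : Fin d → ℝ) (μ : Fin k → ℝ) (v : Fin k → Fin d → ℝ) :
    pairing m (∑ i, μ i • v i) = ∑ i, μ i * pairing m (v i) := by
  unfold pairing
  simp only [Finset.sum_apply, Pi.smul_apply, smul_eq_mul, Finset.mul_sum]
  rw [Finset.sum_comm]
  exact Finset.sum_congr rfl fun i _ => Finset.sum_congr rfl fun j _ => by ring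

lemma pairing_sum_smul_left {d : ℕ} {ι : Type*} (s : Finset ι) (w : ι → ℝ) (y : ι → Fin d → ℝ)
    (x : Fin d → ℝ) :
    pairing (∑ i ∈ s, w i • y i) x = ∑ i ∈ s, w i * pairing (y i) x := by
  unfold pairing
  simp only [Finset.sum_apply, Pi.smul_apply, smul_eq_mul, Finset.sum_mul, Finset.mul_sum]
  rw [Finset.sum_comm]
  exact Finset.sum_congr rfl fun i _ => Finset.sum_congr rfl fun j _ => by ring

end GorAux

namespace GorAux

lemma exists_lattice_dual_le_neg_two {d : ℕ} {Δ : Set (Fin d → ℝ)} (hΔ : IsReflexive Δ)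
    {x : Fin d → ℝ} (hxL : IsLatticePt x) (hx : x ∉ Δ) :
    ∃ u : Fin d → ℝ, IsLatticePt u ∧ (∀ y ∈ Δ, -1 ≤ pairing u y) ∧ pairing u x ≤ -2 := by
  obtain ⟨S, hSlat, hS⟩ := hΔ.1
  have hconv : Convex ℝ Δ := hS ▸ convex_convexHull ℝ _
  have hclosed : IsClosed Δ := hS ▸ (S.finite_toSet.isCompact_convexHull (𝕜 := ℝ)).isClosed
  obtain ⟨f, c, hfΔ, hfx⟩ := geometric_hahn_banach_closed_point hconv hclosed hx
  have h0Δ : (0 : Fin d → ℝ) ∈ Δ := interior_subset hΔ.2.1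
  have hc : 0 < c := by have := hfΔ 0 h0Δ; simpa using this
  set m : Fin d → ℝ := fun i => -(f (Pi.single i 1)) / c with hmdef
  have hfy : ∀ y : Fin d → ℝ, f y = ∑ i, y i * f (Pi.single i 1) := by
    intro y
    conv_lhs => rw [← Finset.univ_sum_single y]
    rw [map_sum]
    refine Finset.sum_congr rfl fun i _ => ?_
    have h1 : (Pi.single i (y i) : Fin d → ℝ) = y i • (Pi.single i (1 : ℝ) : Fin d → ℝ) := by
      rw [← Pi.single_smul, smul_eq_mul, mul_one]
    rw [h1, map_smul, smul_eq_mul]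
  have hm : ∀ y : Fin d → ℝ, pairing m y = -(f y) / c := by
    intro y
    have : pairing m y = (∑ i, y i * f (Pi.single i 1)) * (-1 / c) := by
      unfold pairing
      rw [Finset.sum_mul]
      refine Finset.sum_congr rfl fun i _ => ?_
      simp only [hmdef]
      ring
    rw [this, ← hfy]
    ring
  have hmdual : m ∈ dualPolytope Δ := by
    intro y hy
    rw [hm]
    have h1 : f y / c ≤ 1 := by rw [div_le_one hc]; exact (hfΔ y hy).le
    rw [neg_div]
    linarith
  have hmx : pairing m x < -1 := by
    rw [hm]
    have h1 : 1 < f x / c := (one_lt_div hc).2 hfx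
    rw [neg_div]
    linarith
  obtain ⟨T, hTlat, hT⟩ := hΔ.2.2
  have hmdp := hmdual
  rw [hT, Finset.convexHull_eq] at hmdp
  obtain ⟨w, hw0, hw1, hwx⟩ := hmdp
  have hcm : T.centerMass w id = ∑ y ∈ T, w y • y := by
    rw [Finset.centerMass_eq_of_sum_1 _ _ hw1]
    simp
  have hxlt : ∃ y ∈ T, pairing y x < -1 := by
    by_contra h
    push_neg at h
    have hge : -1 ≤ pairing m x := by
      rw [← hwx, hcm, pairing_sum_smul_left]
      calc (-1 : ℝ) = ∑ y ∈ T, w y * (-1) := by rw [← Finset.sum_mul, hw1]; ring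
        _ ≤ ∑ y ∈ T, w y * pairing y x :=
          Finset.sum_le_sum fun y hy => mul_le_mul_of_nonneg_left (h y hy) (hw0 y hy)
    linarith
  obtain ⟨y, hyT, hyx⟩ := hxlt
  have hylat : IsLatticePt y := hTlat hyT
  have hydual : ∀ n ∈ Δ, -1 ≤ pairing y n := by
    have : y ∈ dualPolytope Δ := by
      rw [hT]; exact subset_convexHull ℝ _ hyT
    exact this
  refine ⟨y, hylat, hydual, ?_⟩
  obtain ⟨a, ha⟩ := (isLatticePt_iff y).1 hylat
  obtain ⟨b, hb⟩ := (isLatticePt_iff x).1 hxL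
  rw [ha, hb, pairing_int] at hyx ⊢
  have hz : (∑ i, a i * b i : ℤ) < -1 := by exact_mod_cast hyx
  have : (∑ i, a i * b i : ℤ) ≤ -2 := by omega
  exact_mod_cast this

end GorAux

namespace GorAux

lemma sum_coeff_ge_two {d k : ℕ} {Δ : Set (Fin d → ℝ)} (hΔ : IsReflexive Δ)
    {v : Fin k → (Fin d → ℝ)} (hvΔ : ∀ i, v i ∈ Δ) (hli : LinearIndependent ℝ v)
    (hcone : coneOf v ∩ Δ ∩ latticePts d = insert (0 : Fin d → ℝ) (Set.range v))
    (μ : Fin k → ℝ) (h0 : ∀ i, 0 ≤ μ i) (h1 : ∀ i, μ i < 1) (hne : ∃ i, μ i ≠ 0)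
    (hlat : IsLatticePt (∑ i, μ i • v i)) : 2 ≤ ∑ i, μ i := by
  set x := ∑ i, μ i • v i with hxdef
  have hxcone : x ∈ coneOf v := ⟨μ, h0, rfl⟩
  have hxnot : x ∉ insert (0 : Fin d → ℝ) (Set.range v) := by
    intro hmem
    rcases Set.mem_insert_iff.1 hmem with h0' | ⟨j, hj⟩
    · obtain ⟨i, hi⟩ := hne
      have hz : ∑ i, μ i • v i = 0 := by rw [← hxdef]; exact h0'
      exact hi (linearIndependent_iff'.1 hli Finset.univ μ hz i (Finset.mem_univ i))
    · have hsum : ∑ i, (μ i - if i = j then 1 else 0) • v i = 0 := by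
        simp only [sub_smul, Finset.sum_sub_distrib, ite_smul, one_smul, zero_smul]
        rw [Finset.sum_ite_eq' Finset.univ j v]
        simp [← hxdef, hj]
      have hj1 := linearIndependent_iff'.1 hli Finset.univ _ hsum j (Finset.mem_univ j)
      simp at hj1
      have := h1 j
      linarith
  have hxΔ : x ∉ Δ := fun hxΔ => hxnot (hcone ▸ ⟨⟨hxcone, hxΔ⟩, hlat⟩)
  obtain ⟨u, hulat, hudual, hux⟩ := exists_lattice_dual_le_neg_two hΔ hlat hxΔ
  have hrw : pairing u x = ∑ i, μ i * pairing u (v i) := pairing_sum_smul_right u μ v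
  have hge : -(∑ i, μ i) ≤ pairing u x := by
    rw [hrw]
    calc -(∑ i, μ i) = ∑ i, μ i * (-1) := by rw [← Finset.sum_mul]; ring
      _ ≤ ∑ i, μ i * pairing u (v i) :=
        Finset.sum_le_sum fun i _ => mul_le_mul_of_nonneg_left (hudual _ (hvΔ i)) (h0 i)
  linarith

end GorAux

namespace GorAux

lemma lattice_fract {d k : ℕ} {v : Fin k → Fin d → ℝ} {vz : Fin k → Fin d → ℤ}
    (hvz : ∀ i, v i = toRealVec (vz i)) (x : Fin d → ℤ) (lam : Fin k → ℝ)
    (hlam : ∑ i, lam i • v i = toRealVec x) :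
    IsLatticePt (∑ i, Int.fract (lam i) • v i) := by
  have heq : ∑ i, Int.fract (lam i) • v i = toRealVec x - ∑ i, (⌊lam i⌋ : ℝ) • v i := by
    rw [← hlam, ← Finset.sum_sub_distrib]
    refine Finset.sum_congr rfl fun i _ => ?_
    rw [← sub_smul, Int.self_sub_floor]
  rw [heq]
  intro j
  refine ⟨x j - ∑ i, ⌊lam i⌋ * vz i j, ?_⟩
  have h2 : (∑ i, (⌊lam i⌋ : ℝ) • v i) j = ∑ i, (⌊lam i⌋ : ℝ) * (vz i j : ℝ) := by
    simp only [Finset.sum_apply, Pi.smul_apply, smul_eq_mul]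
    exact Finset.sum_congr rfl fun i _ => by rw [hvz i]; rfl
  simp only [Pi.sub_apply, h2, toRealVec]
  push_cast
  ring

end GorAux


set_option maxHeartbeats 1000000
open GorAux

/-- For a reflexive polytope `Δ ⊆ ℝ^d` and `1 ≤ k ≤ 4` linearly
independent lattice points `v₁,…,v_k ∈ Δ` with `Cone(v₁,…,v_k) ∩ Δ ∩ ℤ^d = {0,v₁,…,v_k}`,
there is a lattice point `m ∈ ℤ^d` with `⟨m, vᵢ⟩ = 1` for all `i`. -/
theorem gorenstein_cone_has_integral_support
    (d k : ℕ) (hk1 : 1 ≤ k) (hk4 : k ≤ 4)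
    (Δ : Set (Fin d → ℝ)) (hΔ : IsReflexive Δ)
    (v : Fin k → (Fin d → ℝ))
    (hvΔ : ∀ i, v i ∈ Δ) (hvL : ∀ i, IsLatticePt (v i))
    (hli : LinearIndependent ℝ v)
    (hcone : coneOf v ∩ Δ ∩ latticePts d = insert (0 : Fin d → ℝ) (Set.range v)) :
    ∃ m : Fin d → ℤ, ∀ i, pairing (toRealVec m) (v i) = 1 := by
  classical
  choose vz hvzs using fun j => (isLatticePt_iff (v j)).1 (hvL j)
  -- the coordinatewise cast as a ℤ-linear map
  let L : (Fin d → ℤ) →ₗ[ℤ] (Fin d → ℝ) :=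
    { toFun := toRealVec
      map_add' := by intro a b; funext i; simp [toRealVec]
      map_smul' := by intro c a; funext i; simp [toRealVec] }
  have hL : ∀ x : Fin d → ℤ, L x = toRealVec x := fun _ => rfl
  -- a real functional with g (v i) = 1
  set b := Module.Basis.span hli with hb
  let f0 : (Submodule.span ℝ (Set.range v)) →ₗ[ℝ] ℝ := b.constr ℝ (fun _ => (1 : ℝ))
  obtain ⟨g, hg⟩ := LinearMap.exists_extend f0
  have hgv : ∀ i, g (v i) = 1 := by
    intro i
    have h1 : g ((Submodule.span ℝ (Set.range v)).subtype (b i)) = f0 (b i) := by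
      rw [← LinearMap.comp_apply, hg]
    have h2 : ((Submodule.span ℝ (Set.range v)).subtype (b i)) = v i := by
      show ((b i : Fin d → ℝ)) = v i
      rw [hb]; exact congrArg Subtype.val (Module.Basis.span_apply hli i)
    rw [h2] at h1
    rw [h1]
    exact b.constr_basis ℝ _ i
  -- the saturated lattice N
  set N : Submodule ℤ (Fin d → ℤ) :=
    Submodule.comap L ((Submodule.span ℝ (Set.range v)).restrictScalars ℤ) with hN
  have hmemN : ∀ x : Fin d → ℤ, x ∈ N ↔ L x ∈ Submodule.span ℝ (Set.range v) := by
    intro x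
    rw [hN]
    simp [Submodule.mem_comap, Submodule.restrictScalars_mem]
  -- integrality of g on N
  have hint : ∀ x : Fin d → ℤ, x ∈ N → ∃ z : ℤ, g (L x) = (z : ℝ) := by
    intro x hx
    obtain ⟨lam, hlam⟩ := (Submodule.mem_span_range_iff_exists_fun ℝ).1 ((hmemN x).1 hx)
    have hgl : g (L x) = ∑ i, lam i := by
      rw [← hlam, map_sum]
      simp [hgv]
    by_cases hall : ∀ i, Int.fract (lam i) = 0
    · refine ⟨∑ i, ⌊lam i⌋, ?_⟩
      rw [hgl]; push_cast
      refine Finset.sum_congr rfl fun i _ => ?_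
      have h3 := Int.self_sub_fract (lam i)
      rw [hall i] at h3
      linarith
    · push_neg at hall
      obtain ⟨i0, hi0⟩ := hall
      have hlam' : ∑ i, lam i • v i = toRealVec x := by rw [hlam, hL]
      have hlat1 : IsLatticePt (∑ i, Int.fract (lam i) • v i) := lattice_fract hvzs x lam hlam'
      have hlamneg : ∑ i, (-lam i) • v i = toRealVec (-x) := by
        have : ∑ i, (-lam i) • v i = -∑ i, lam i • v i := by
          rw [← Finset.sum_neg_distrib]
          exact Finset.sum_congr rfl fun i _ => by rw [neg_smul]
        rw [this, hlam']
        funext i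
        simp [toRealVec]
      have hlat2 : IsLatticePt (∑ i, Int.fract (-lam i) • v i) :=
        lattice_fract hvzs (-x) (fun i => -lam i) hlamneg
      have hs1 : 2 ≤ ∑ i, Int.fract (lam i) :=
        sum_coeff_ge_two hΔ hvΔ hli hcone _ (fun i => Int.fract_nonneg _)
          (fun i => Int.fract_lt_one _) ⟨i0, hi0⟩ hlat1
      have hi0' : Int.fract (-lam i0) ≠ 0 := by
        rw [Int.fract_neg hi0]
        have := Int.fract_lt_one (lam i0)
        intro hcontra
        have : Int.fract (lam i0) = 1 := by linarith
        linarith [Int.fract_lt_one (lam i0)]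
      have hs2 : 2 ≤ ∑ i, Int.fract (-lam i) :=
        sum_coeff_ge_two hΔ hvΔ hli hcone _ (fun i => Int.fract_nonneg _)
          (fun i => Int.fract_lt_one _) ⟨i0, hi0'⟩ hlat2
      have hbound : ∑ i, (Int.fract (lam i) + Int.fract (-lam i)) ≤ (k : ℝ) := by
        calc ∑ i, (Int.fract (lam i) + Int.fract (-lam i)) ≤ ∑ _i : Fin k, (1 : ℝ) := by
              refine Finset.sum_le_sum fun i _ => ?_
              by_cases h : Int.fract (lam i) = 0
              · have h' : Int.fract (-lam i) = 0 := by
                  by_contra hne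
                  have h2 := Int.fract_neg hne
                  rw [neg_neg] at h2
                  rw [h2] at h
                  have := Int.fract_lt_one (-lam i)
                  linarith [Int.fract_nonneg (-lam i), (by linarith : Int.fract (-lam i) = 1)]
                rw [h, h']; norm_num
              · rw [Int.fract_neg h]; linarith [Int.fract_nonneg (lam i)]
          _ = (k : ℝ) := by simp
      have hsplit : ∑ i, (Int.fract (lam i) + Int.fract (-lam i))
          = (∑ i, Int.fract (lam i)) + ∑ i, Int.fract (-lam i) := Finset.sum_add_distrib
      have hk4' : (k : ℝ) ≤ 4 := by exact_mod_cast hk4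
      have hs1e : ∑ i, Int.fract (lam i) = 2 := by
        rw [hsplit] at hbound; linarith
      refine ⟨(∑ i, ⌊lam i⌋) + 2, ?_⟩
      rw [hgl]
      have hlamsplit : ∑ i, lam i = (∑ i, ((⌊lam i⌋ : ℝ))) + ∑ i, Int.fract (lam i) := by
        rw [← Finset.sum_add_distrib]
        exact Finset.sum_congr rfl fun i _ => (Int.floor_add_fract (lam i)).symm
      rw [hlamsplit, hs1e]
      push_cast
      ring
  -- floor of g∘L as a ℤ-linear functional on N
  have hφval : ∀ y : N, ((⌊g (L (y : Fin d → ℤ))⌋ : ℤ) : ℝ) = g (L (y : Fin d → ℤ)) := by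
    intro y
    obtain ⟨z, hz⟩ := hint y y.2
    rw [hz]
    simp
  let φ : N →ₗ[ℤ] ℤ :=
    { toFun := fun y => ⌊g (L (y : Fin d → ℤ))⌋
      map_add' := by
        intro a c
        have h1 : ((⌊g (L ((a + c : N) : Fin d → ℤ))⌋ : ℤ) : ℝ)
            = ((⌊g (L (a : Fin d → ℤ))⌋ + ⌊g (L (c : Fin d → ℤ))⌋ : ℤ) : ℝ) := by
          rw [hφval]
          push_cast [hφval]
          rw [map_add, map_add]
        exact_mod_cast h1
      map_smul' := by
        intro c a
        have h1 : ((⌊g (L ((c • a : N) : Fin d → ℤ))⌋ : ℤ) : ℝ)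
            = ((c * ⌊g (L (a : Fin d → ℤ))⌋ : ℤ) : ℝ) := by
          rw [hφval]
          have hcoe : ((c • a : N) : Fin d → ℤ) = c • (a : Fin d → ℤ) := rfl
          rw [hcoe, map_smul, map_zsmul, zsmul_eq_mul]
          push_cast [hφval]
          ring
        simp only [RingHom.id_apply, smul_eq_mul]
        exact_mod_cast h1 }
  -- the quotient is torsion-free, hence free, hence N splits off
  haveI : NoZeroSMulDivisors ℤ ((Fin d → ℤ) ⧸ N) := by
    constructor
    intro c y hcy
    by_cases hc : c = 0
    · exact Or.inl hc
    refine Or.inr ?_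
    obtain ⟨x, rfl⟩ := N.mkQ_surjective y
    rw [← map_smul, Submodule.mkQ_apply, Submodule.Quotient.mk_eq_zero] at hcy
    rw [Submodule.mkQ_apply, Submodule.Quotient.mk_eq_zero]
    have hmem := (hmemN (c • x)).1 hcy
    rw [map_smul] at hmem
    refine (hmemN x).2 ?_
    have hcR : ((c : ℝ)) ≠ 0 := by exact_mod_cast hc
    have h2 : L x = (c : ℝ)⁻¹ • ((c : ℤ) • L x) := by
      rw [← Int.cast_smul_eq_zsmul ℝ, smul_smul, inv_mul_cancel₀ hcR, one_smul]
    rw [h2]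
    exact Submodule.smul_mem _ _ hmem
  haveI : Module.Finite ℤ ((Fin d → ℤ) ⧸ N) :=
    Module.Finite.of_surjective N.mkQ N.mkQ_surjective
  haveI : Module.Free ℤ ((Fin d → ℤ) ⧸ N) := Module.free_of_finite_type_torsion_free'
  obtain ⟨σ, hσ⟩ := Module.projective_lifting_property N.mkQ LinearMap.id N.mkQ_surjective
  have hp : ∀ y : Fin d → ℤ, y - σ (N.mkQ y) ∈ N := by
    intro y
    have h1 : N.mkQ (y - σ (N.mkQ y)) = 0 := by
      rw [map_sub]
      have h2 : N.mkQ (σ (N.mkQ y)) = N.mkQ y := by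
        rw [← LinearMap.comp_apply, hσ, LinearMap.id_apply]
      rw [h2, sub_self]
    rwa [Submodule.mkQ_apply, Submodule.Quotient.mk_eq_zero] at h1
  let P : (Fin d → ℤ) →ₗ[ℤ] N :=
    LinearMap.codRestrict N (LinearMap.id - σ ∘ₗ N.mkQ) (fun y => by simpa using hp y)
  let ψ : (Fin d → ℤ) →ₗ[ℤ] ℤ := φ ∘ₗ P
  refine ⟨fun i => ψ (Pi.single i 1), ?_⟩
  intro j
  have hvjN : vz j ∈ N := by
    refine (hmemN (vz j)).2 ?_
    rw [hL, ← hvzs j]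
    exact Submodule.subset_span ⟨j, rfl⟩
  have hPvz : ((P (vz j)) : Fin d → ℤ) = vz j := by
    have h1 : N.mkQ (vz j) = 0 := (Submodule.Quotient.mk_eq_zero N).2 hvjN
    simp [P, h1]
  have hψvz : ψ (vz j) = 1 := by
    show ⌊g (L ((P (vz j) : N) : Fin d → ℤ))⌋ = 1
    rw [hPvz, hL, ← hvzs j, hgv j]
    exact Int.floor_one
  have hsingle : ∑ i, vz j i • (Pi.single i (1 : ℤ) : Fin d → ℤ) = vz j := by
    conv_rhs => rw [← Finset.univ_sum_single (vz j)]
    refine Finset.sum_congr rfl fun i _ => ?_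
    rw [← Pi.single_smul, smul_eq_mul, mul_one]
  have hsum : ∑ i, vz j i * ψ (Pi.single i 1) = 1 := by
    have h1 : ∑ i, vz j i * ψ (Pi.single i 1) = ψ (∑ i, vz j i • (Pi.single i (1 : ℤ))) := by
      rw [map_sum]
      exact Finset.sum_congr rfl fun i _ => by rw [map_smul, smul_eq_mul]
    rw [h1, hsingle, hψvz]
  rw [hvzs j, pairing_int]
  have h3 : (∑ i, ψ (Pi.single i 1) * vz j i) = 1 := by
    have h2 : ∑ i, ψ (Pi.single i 1) * vz j i = ∑ i, vz j i * ψ (Pi.single i 1) :=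
      Finset.sum_congr rfl fun i _ => mul_comm _ _
    rw [h2, hsum]
  exact_mod_cast h3
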